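/- Let X be a real normed space and let f : X → ℝ be Fréchet continuously differentiable. Suppose that for all x, y ∈ X, f(x) ≤ f(y) implies ⟨∇f(y), y − x⟩ ≥ 0. Then for all x, y ∈ X, ⟨∇f(x), y − x⟩ > 0 implies ⟨∇f(y), y − x⟩ ≥ 0. -/
import Mathlib

/-- The Arrow–Enthoven gradient condition (b) implies the quasimonotonicity
condition (c) for the gradient. -/
theorem gradient_cond_imp_quasimonotone {X : Type*} [NormedAddCommGroup X] [NormedSpace ℝ X]
    (f : X → ℝ) (f' : X → X →L[ℝ] ℝ)
    (hderiv : ∀ x, HasFDerivAt f (f' x) x) (hcont : Continuous f')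
    (hb : ∀ x y : X, f x ≤ f y → 0 ≤ f' y (y - x)) :
    ∀ x y : X, 0 < f' x (y - x) → 0 ≤ f' y (y - x) := by
  intro x y hx
  by_contra h
  push_neg at h
  have hfy : f y < f x := by
    by_contra hle
    push_neg at hle
    exact absurd (hb x y hle) (not_le.mpr h)
  have h2 := hb y x hfy.le
  have : f' x (x - y) = - f' x (y - x) := by
    rw [← map_neg]; congr 1; abel
  linarith [this ▸ h2]
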